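/- Let p be real with 7/8 ≤ p ≤ 1 and define d_k = D_k(p)². Then for every k ≥ 2, d_{k+1} ≤ d_k. -/
import Mathlib

private lemma fitch_aux_Q (q c : ℝ) (hq1 : 3/4 ≤ q) (hq2 : q ≤ 1) (hc0 : 0 ≤ c) (hc1 : q*c ≤ 1-q) :
    0 ≤ -3+7*q-3*q*c-q^2+4*q^2*c-3*q^2*c^2-3*q^3-q^3*c-q^3*c^2-3*q^3*c^3 := by
  nlinarith [mul_nonneg (sub_nonneg.2 hc1) hc0, sq_nonneg (1-q), mul_nonneg (sub_nonneg.2 hq2) hc0, mul_nonneg (sub_nonneg.2 hq2) (sub_nonneg.2 hc1), mul_nonneg (mul_nonneg (sub_nonneg.2 hq2) (sub_nonneg.2 hq2)) (sub_nonneg.2 hq2), mul_nonneg (mul_nonneg hc0 hc0) hc0, sq_nonneg c, mul_nonneg (sub_nonneg.2 hc1) (sub_nonneg.2 hc1)]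

private lemma fitch_aux_q2le (q x : ℝ) (hq1 : 3/4 ≤ q) (hq2 : q ≤ 1) (hx0 : 0 ≤ x) (hx1 : q*x ≤ 1-q) :
    q^2 ≤ 1-2*x+3*x^2 := by
  nlinarith [sq_nonneg (q*x-(1-q)), mul_nonneg (sub_nonneg.2 hx1) (sub_nonneg.2 hx1), mul_nonneg (mul_nonneg (sub_nonneg.2 hq2) (sub_nonneg.2 hq2)) (sub_nonneg.2 hq2), mul_nonneg hx0 (sub_nonneg.2 hq2), sq_nonneg x, mul_nonneg (sub_nonneg.2 hx1) hx0]

private lemma fitch_aux_key (q c s : ℝ) (hq1 : 3/4 ≤ q) (hq2 : q ≤ 1) (hc0 : 0 ≤ c)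
    (hc1 : q*c ≤ 1-q) (hs0 : 0 ≤ s)
    (hs5 : q*(1-2*c+3*c^2) - 2*(1-q) ≤ q*s) (hs6 : s ≤ 1-2*c+3*c^2) :
    q*(1 - 2*((1-2*c+3*c^2-s)/2) + 3*((1-2*c+3*c^2-s)/2)^2) - 2*(1-q)
      ≤ q*(q^2*(1+c)^2*s) := by
  have hq0 : (0:ℝ) ≤ q := by linarith
  have hGA : 0 ≤ 4*q^3*(1+c)^2*(q*(1-2*c+3*c^2)-2*(1-q)) - 32*q^2 + 40*q - 12 := by
    have hQ := fitch_aux_Q q c hq1 hq2 hc0 hc1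
    have e1 : (0:ℝ) ≤ 1-q-q*c := by linarith
    nlinarith [mul_nonneg e1 hQ]
  have hGF : 0 ≤ 4*q^3*(1+c)^2*(1-2*c+3*c^2) - 12*q + 8 := by
    nlinarith [mul_nonneg (sq_nonneg (q-1)) (show (0:ℝ) ≤ q+2 by linarith),
      mul_nonneg (pow_nonneg hq0 3) (pow_nonneg hc0 3),
      mul_nonneg (pow_nonneg hq0 3) (pow_nonneg hc0 4)]
  have hA : 0 ≤ q*s - (q*(1-2*c+3*c^2)-2*(1-q)) := by linarith
  have hFs : 0 ≤ (1-2*c+3*c^2) - s := by linarith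
  rcases eq_or_lt_of_le hq2 with heq | hlt
  · subst heq
    have hc : c = 0 := le_antisymm (by linarith) hc0
    subst hc
    nlinarith [mul_nonneg (show (0:ℝ) ≤ s-1 by nlinarith) (show (0:ℝ) ≤ 1-s by nlinarith)]
  · have hpos : (0:ℝ) < q*(1-q) := mul_pos (by linarith) (by linarith)
    nlinarith [hpos, mul_nonneg (mul_nonneg hq0 hFs) hGA, mul_nonneg (mul_nonneg hq0 hA) hGF,
      mul_nonneg (mul_nonneg (le_of_lt hpos) hA) hFs]

private lemma fitch_base (q : ℝ) (hq1 : 3/4 ≤ q) (hq2 : q ≤ 1) :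
    0 ≤ (1-q^2)/2 ∧ q*((1-q^2)/2) ≤ 1-q ∧ 0 ≤ q ∧ q^2*q^2 ≤ q^4 ∧
    q*(1-2*((1-q^2)/2)+3*((1-q^2)/2)^2) - 2*(1-q) ≤ q*(q^2*q^2) ∧
    q^2*q^2 ≤ 1-2*((1-q^2)/2)+3*((1-q^2)/2)^2 := by
  have h1 : (0:ℝ) ≤ 1-q^2 := by nlinarith
  refine ⟨by linarith, ?_, by linarith, by nlinarith, ?_, ?_⟩
  · nlinarith [mul_nonneg (sub_nonneg.2 hq2) (show (0:ℝ) ≤ 2-q-q^2 by nlinarith)]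
  · nlinarith [mul_nonneg (sq_nonneg (q-1)) (show (0:ℝ) ≤ q^3+2*q^2+5*q+8 by nlinarith)]
  · nlinarith [sq_nonneg (1-q^2), mul_nonneg (sq_nonneg q) h1]

set_option maxHeartbeats 1600000 in
private lemma fitch_step (q c d c' d' : ℝ)
    (hq1 : 3/4 ≤ q) (hq2 : q ≤ 1)
    (hc0 : 0 ≤ c) (hc1 : q*c ≤ 1-q) (hd0 : 0 ≤ d)
    (h4 : q^2*d^2 ≤ q^4)
    (h5 : q*(1-2*c+3*c^2) - 2*(1-q) ≤ q*(q^2*d^2))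
    (h6 : q^2*d^2 ≤ 1-2*c+3*c^2)
    (hc' : c' = (1-2*c+3*c^2-q^2*d^2)/2) (hd' : d' = q*(1+c)*d) :
    0 ≤ c' ∧ q*c' ≤ 1-q ∧ 0 ≤ d' ∧ q^2*d'^2 ≤ q^4 ∧
    q*(1-2*c'+3*c'^2) - 2*(1-q) ≤ q*(q^2*d'^2) ∧ q^2*d'^2 ≤ 1-2*c'+3*c'^2 := by
  subst hc'; subst hd'
  have hq0 : (0:ℝ) ≤ q := by linarith
  have hs0 : 0 ≤ q^2*d^2 := by positivity
  have key := fitch_aux_key q c (q^2*d^2) hq1 hq2 hc0 hc1 hs0 h5 h6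
  have hc0' : 0 ≤ (1-2*c+3*c^2-q^2*d^2)/2 := by linarith
  have hc1' : q*((1-2*c+3*c^2-q^2*d^2)/2) ≤ 1-q := by nlinarith [h5]
  have hq2' := fitch_aux_q2le q ((1-2*c+3*c^2-q^2*d^2)/2) hq1 hq2 hc0' hc1'
  have hq41 : q^4 ≤ q^2 := by nlinarith [mul_nonneg (sq_nonneg q) (show (0:ℝ) ≤ 1-q^2 by nlinarith)]
  have hd2 : 0 ≤ (1-(q+q*c)^2)*(q^2*d^2) :=
    mul_nonneg (by nlinarith [mul_nonneg hq0 hc0]) hs0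
  exact ⟨hc0', hc1', mul_nonneg (mul_nonneg hq0 (by linarith)) hd0,
    by nlinarith [hd2, h4], by nlinarith [key], by nlinarith [hq2', hd2, h4, hq41]⟩

private lemma fitch_final (q c d : ℝ) (hq0 : 0 ≤ q) (hc0 : 0 ≤ c) (hc1 : q*c ≤ 1-q) :
    (q*(1+c)*d)^2 ≤ d^2 := by
  nlinarith [mul_nonneg (mul_nonneg (show (0:ℝ) ≤ 1-(q+q*c) by linarith)
    (show (0:ℝ) ≤ 1+(q+q*c) by nlinarith [mul_nonneg hq0 hc0])) (sq_nonneg d), sq_nonneg d]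

/-- For 7/8 ≤ p ≤ 1, d_k = D_k² is decreasing for k ≥ 2. -/
theorem fitch_d_decreasing
    (p : ℝ) (C D : ℕ → ℝ)
    (hC0 : C 0 = 0) (hD0 : D 0 = 1)
    (hC : ∀ n, 2 * C (n + 1) =
        1 - 2 * C n + 3 * (C n) ^ 2 - (2 * p - 1) ^ 2 * (D n) ^ 2)
    (hD : ∀ n, D (n + 1) = (2 * p - 1) * (1 + C n) * D n)
    (hp1 : 7 / 8 ≤ p) (hp2 : p ≤ 1)
    (k : ℕ) (hk : 2 ≤ k) :
    (D (k + 1)) ^ 2 ≤ (D k) ^ 2 := by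
  have hq1 : (3:ℝ)/4 ≤ 2*p-1 := by linarith
  have hq2 : (2*p-1:ℝ) ≤ 1 := by linarith
  have inv : ∀ m : ℕ,
      0 ≤ C (m+1) ∧ (2*p-1) * C (m+1) ≤ 1 - (2*p-1) ∧ 0 ≤ D (m+1) ∧
      (2*p-1)^2 * (D (m+1))^2 ≤ (2*p-1)^4 ∧
      (2*p-1)*(1 - 2*C (m+1) + 3*(C (m+1))^2) - 2*(1-(2*p-1))
        ≤ (2*p-1) * ((2*p-1)^2*(D (m+1))^2) ∧
      (2*p-1)^2*(D (m+1))^2 ≤ 1 - 2*C (m+1) + 3*(C (m+1))^2 := by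
    intro m
    induction m with
    | zero =>
      have h0 := hC 0
      rw [hC0, hD0] at h0
      have h1 : C 1 = (1 - (2*p-1)^2)/2 := by nlinarith [h0]
      have h2 : D 1 = 2*p-1 := by rw [hD 0, hC0, hD0]; ring
      rw [h1, h2]
      exact fitch_base (2*p-1) hq1 hq2
    | succ n ih =>
      obtain ⟨hc0, hc1, hd0, h4, h5, h6⟩ := ih
      have hc' : C (n+2) = (1 - 2*C (n+1) + 3*(C (n+1))^2 - (2*p-1)^2*(D (n+1))^2)/2 := by
        linarith [hC (n+1)]
      exact fitch_step (2*p-1) (C (n+1)) (D (n+1)) (C (n+2)) (D (n+2))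
        hq1 hq2 hc0 hc1 hd0 h4 h5 h6 hc' (hD (n+1))
  obtain ⟨m, rfl⟩ : ∃ m, k = m + 1 := ⟨k-1, by omega⟩
  obtain ⟨hc0, hc1, hd0, -, -, -⟩ := inv m
  rw [hD (m+1)]
  exact fitch_final (2*p-1) (C (m+1)) (D (m+1)) (by linarith) hc0 hc1
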